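/- For every q ∈ (0, 1/√2), the three-qubit pure state |φ⟩ = √(1/2)|000⟩ + √(1/2 − q²)|101⟩ + q|111⟩ (i.e., α₀ = 1/√2, α₁ = 0, α₂ = √(1/2 − q²), α₃ = 0, α₄ = q, θ = 0) satisfies S₁₂² = S₂₃² = 2q², S₁₃² = 3 − 4q², τ₁₂ = τ₂₃ = √2 q, τ₁₃ = 1 (so f(ρ₁₂) = f(ρ₂₃) = (2 + √2 q)/3 and f(ρ₁₃) = 1), and it saturates the complementary relations: S₁₂² + S₁₃² + [3f(ρ₂₃) − 2]² = 3, S₁₃² + S₂₃² + [3f(ρ₁₂) − 2]² = 3, and S₁₃² + [3f(ρ₁₂) − 2]² + [3f(ρ₂₃) − 2]² = 3. -/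
import Mathlib


/-- Squared steering observable S₁₂² of the reduced state ρ₁₂ of the three-qubit
pure state α₀|000⟩ + α₁e^{iθ}|100⟩ + α₂|101⟩ + α₃|110⟩ + α₄|111⟩. -/
noncomputable def S12sq (a0 a1 a2 a3 a4 θ : ℝ) : ℝ :=
  1 + 8 * a0 ^ 2 * a3 ^ 2 - 4 * a0 ^ 2 * a2 ^ 2 - 4 * a1 ^ 2 * a4 ^ 2
    - 4 * a2 ^ 2 * a3 ^ 2 + 8 * a1 * a2 * a3 * a4 * Real.cos θ

/-- Squared steering observable S₁₃² of the reduced state ρ₁₃. -/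
noncomputable def S13sq (a0 a1 a2 a3 a4 θ : ℝ) : ℝ :=
  1 + 8 * a0 ^ 2 * a2 ^ 2 - 4 * a0 ^ 2 * a3 ^ 2 - 4 * a1 ^ 2 * a4 ^ 2
    - 4 * a2 ^ 2 * a3 ^ 2 + 8 * a1 * a2 * a3 * a4 * Real.cos θ

/-- Squared steering observable S₂₃² of the reduced state ρ₂₃. -/
noncomputable def S23sq (a0 a1 a2 a3 a4 θ : ℝ) : ℝ :=
  1 - 4 * a0 ^ 2 * a2 ^ 2 - 4 * a0 ^ 2 * a3 ^ 2 + 8 * a1 ^ 2 * a4 ^ 2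
    + 8 * a2 ^ 2 * a3 ^ 2 - 16 * a1 * a2 * a3 * a4 * Real.cos θ

/-- Partial tangle τ₁₂ = 2α₀√(α₃²+α₄²). -/
noncomputable def tau12 (a0 a1 a2 a3 a4 θ : ℝ) : ℝ :=
  2 * a0 * Real.sqrt (a3 ^ 2 + a4 ^ 2)

/-- Partial tangle τ₁₃ = 2α₀√(α₂²+α₄²). -/
noncomputable def tau13 (a0 a1 a2 a3 a4 θ : ℝ) : ℝ :=
  2 * a0 * Real.sqrt (a2 ^ 2 + a4 ^ 2)

/-- Partial tangle τ₂₃ = 2√(α₀²α₄²+α₁²α₄²+α₂²α₃²−2α₁α₂α₃α₄cosθ). -/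
noncomputable def tau23 (a0 a1 a2 a3 a4 θ : ℝ) : ℝ :=
  2 * Real.sqrt (a0 ^ 2 * a4 ^ 2 + a1 ^ 2 * a4 ^ 2 + a2 ^ 2 * a3 ^ 2
    - 2 * a1 * a2 * a3 * a4 * Real.cos θ)

/-- Average teleportation fidelity f(ρ₁₂), determined by τ₁₂ = 3f(ρ₁₂) − 2. -/
noncomputable def fid12 (a0 a1 a2 a3 a4 θ : ℝ) : ℝ := (tau12 a0 a1 a2 a3 a4 θ + 2) / 3

/-- Average teleportation fidelity f(ρ₁₃), determined by τ₁₃ = 3f(ρ₁₃) − 2. -/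
noncomputable def fid13 (a0 a1 a2 a3 a4 θ : ℝ) : ℝ := (tau13 a0 a1 a2 a3 a4 θ + 2) / 3

/-- Average teleportation fidelity f(ρ₂₃), determined by τ₂₃ = 3f(ρ₂₃) − 2. -/
noncomputable def fid23 (a0 a1 a2 a3 a4 θ : ℝ) : ℝ := (tau23 a0 a1 a2 a3 a4 θ + 2) / 3

set_option maxHeartbeats 1600000 in
/-- For every q ∈ (0, 1/√2), the genuinely entangled three-qubit pure state
|φ⟩ = √(1/2)|000⟩ + √(1/2 − q²)|101⟩ + q|111⟩ (i.e. α₀ = √(1/2), α₁ = 0,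
α₂ = √(1/2 − q²), α₃ = 0, α₄ = q, θ = 0) satisfies S₁₂² = S₂₃² = 2q²,
S₁₃² = 3 − 4q², τ₁₂ = τ₂₃ = √2 q, τ₁₃ = 1 (so f(ρ₁₂) = f(ρ₂₃) = (2+√2 q)/3 and
f(ρ₁₃) = 1), and it saturates the complementary relations:
S₁₂² + S₁₃² + [3f(ρ₂₃)−2]² = 3, S₁₃² + S₂₃² + [3f(ρ₁₂)−2]² = 3, and
S₁₃² + [3f(ρ₁₂)−2]² + [3f(ρ₂₃)−2]² = 3. -/
theorem stmt16 (q : ℝ) (hq0 : 0 < q) (hq1 : q < 1 / Real.sqrt 2)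
    (a0 a1 a2 a3 a4 θ : ℝ)
    (ha0 : a0 = Real.sqrt (1 / 2)) (ha1 : a1 = 0) (ha2 : a2 = Real.sqrt (1 / 2 - q ^ 2))
    (ha3 : a3 = 0) (ha4 : a4 = q) (hθ : θ = 0) :
    S12sq a0 a1 a2 a3 a4 θ = 2 * q ^ 2 ∧
    S23sq a0 a1 a2 a3 a4 θ = 2 * q ^ 2 ∧
    S13sq a0 a1 a2 a3 a4 θ = 3 - 4 * q ^ 2 ∧
    tau12 a0 a1 a2 a3 a4 θ = Real.sqrt 2 * q ∧
    tau23 a0 a1 a2 a3 a4 θ = Real.sqrt 2 * q ∧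
    tau13 a0 a1 a2 a3 a4 θ = 1 ∧
    fid12 a0 a1 a2 a3 a4 θ = (2 + Real.sqrt 2 * q) / 3 ∧
    fid23 a0 a1 a2 a3 a4 θ = (2 + Real.sqrt 2 * q) / 3 ∧
    fid13 a0 a1 a2 a3 a4 θ = 1 ∧
    S12sq a0 a1 a2 a3 a4 θ + S13sq a0 a1 a2 a3 a4 θ
        + (3 * fid23 a0 a1 a2 a3 a4 θ - 2) ^ 2 = 3 ∧
    S13sq a0 a1 a2 a3 a4 θ + S23sq a0 a1 a2 a3 a4 θ
        + (3 * fid12 a0 a1 a2 a3 a4 θ - 2) ^ 2 = 3 ∧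
    S13sq a0 a1 a2 a3 a4 θ + (3 * fid12 a0 a1 a2 a3 a4 θ - 2) ^ 2
        + (3 * fid23 a0 a1 a2 a3 a4 θ - 2) ^ 2 = 3 := by
  subst ha0 ha1 ha2 ha3 hθ
  rw [ha4]
  clear ha4
  have hs : (0:ℝ) < Real.sqrt 2 := Real.sqrt_pos.mpr (by norm_num)
  have h2 : Real.sqrt 2 ^ 2 = 2 := Real.sq_sqrt (by norm_num)
  have hq1' : q * Real.sqrt 2 < 1 := (lt_div_iff₀ hs).mp hq1
  have hq2 : q ^ 2 ≤ 1 / 2 := by nlinarith [hs.le, hq0.le]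
  have hs0 : Real.sqrt (1/2) ^ 2 = 1/2 := Real.sq_sqrt (by norm_num)
  have hs2 : Real.sqrt (1/2 - q^2) ^ 2 = 1/2 - q^2 := Real.sq_sqrt (by linarith)
  have h4 : Real.sqrt (4:ℝ) = 2 := by
    rw [show (4:ℝ) = 2^2 by norm_num, Real.sqrt_sq (by norm_num : (0:ℝ) ≤ 2)]
  have h12 : Real.sqrt 2 = 2 * Real.sqrt (1/2) := by
    calc Real.sqrt 2 = Real.sqrt (4 * (1/2)) := by norm_num
      _ = Real.sqrt 4 * Real.sqrt (1/2) := Real.sqrt_mul (by norm_num) _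
      _ = 2 * Real.sqrt (1/2) := by rw [h4]
  have hsqq : Real.sqrt (q ^ 2) = q := Real.sqrt_sq hq0.le
  have ht12 : tau12 (Real.sqrt (1/2)) 0 (Real.sqrt (1/2 - q^2)) 0 q 0
      = Real.sqrt 2 * q := by
    unfold tau12
    rw [show (0:ℝ)^2 + q^2 = q^2 by ring, hsqq, h12]
  have ht13 : tau13 (Real.sqrt (1/2)) 0 (Real.sqrt (1/2 - q^2)) 0 q 0 = 1 := by
    unfold tau13
    rw [hs2, show 1/2 - q^2 + q^2 = 1/2 by ring]
    nlinarith [hs0, Real.sqrt_nonneg (1/2:ℝ)]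
  have ht23 : tau23 (Real.sqrt (1/2)) 0 (Real.sqrt (1/2 - q^2)) 0 q 0
      = Real.sqrt 2 * q := by
    unfold tau23
    rw [show Real.sqrt (1/2) ^ 2 * q ^ 2 + 0 ^ 2 * q ^ 2
        + Real.sqrt (1/2 - q^2) ^ 2 * 0 ^ 2
        - 2 * 0 * Real.sqrt (1/2 - q^2) * 0 * q * Real.cos 0
        = Real.sqrt (1/2) ^ 2 * q ^ 2 by ring, hs0,
      show 1/2 * q^2 = (Real.sqrt (1/2) * q)^2 by rw [mul_pow, hs0],
      Real.sqrt_sq (mul_nonneg (Real.sqrt_nonneg _) hq0.le), h12]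
    ring
  refine ⟨?_, ?_, ?_, ht12, ht23, ht13, ?_, ?_, ?_, ?_, ?_, ?_⟩ <;>
    simp only [S12sq, S13sq, S23sq, fid12, fid13, fid23, ht12, ht13, ht23,
      Real.cos_zero, hs0, hs2, mul_pow] <;>
    nlinarith [hs0, hs2, h2, hq0.le, hs.le]
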